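/- Let G and G' be finite groups, and let X be a finite (G,G')-biset (a finite set with a right G-action and a free left G'-action that commute). Then X decomposes as a disjoint union of indecomposable sub-bisets, and each indecomposable finite (G,G')-biset is isomorphic to G' ×_{(H,φ)} G for some subgroup H ≤ G and homomorphism φ : H → G'. -/
import Mathlib


/-- The relation on `G' × G` generated by `(x, g·y) ∼ (x·ψ(g), y)` for `g ∈ H`. -/
def BisetRel {G G' : Type*} [Group G] [Group G'] (H : Subgroup G) (ψ : ↥H →* G') :
    G' × G → G' × G → Prop :=
  fun a b => ∃ h : ↥H, b = (a.1 * ψ h, (h : G)⁻¹ * a.2)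

/-- The right `G`-action on the biset `G' ×_{(H,ψ)} G`. -/
def bisetMulR {G G' : Type*} [Group G] [Group G'] (H : Subgroup G) (ψ : ↥H →* G')
    (q : Quot (BisetRel H ψ)) (g : G) : Quot (BisetRel H ψ) :=
  Quot.lift (fun xy => Quot.mk (BisetRel H ψ) (xy.1, xy.2 * g))
    (by rintro a b ⟨h, rfl⟩; exact Quot.sound ⟨h, by simp [mul_assoc]⟩) q

/-- The left `G'`-action on the biset `G' ×_{(H,ψ)} G`. -/
def bisetMulL {G G' : Type*} [Group G] [Group G'] (H : Subgroup G) (ψ : ↥H →* G')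
    (g' : G') (q : Quot (BisetRel H ψ)) : Quot (BisetRel H ψ) :=
  Quot.lift (fun xy => Quot.mk (BisetRel H ψ) (g' * xy.1, xy.2))
    (by rintro a b ⟨h, rfl⟩; exact Quot.sound ⟨h, by simp [mul_assoc]⟩) q

/-- A finite `(G,G')`-biset decomposes as the disjoint union of its orbits under the
combined action (the orbit relation is an equivalence), and each orbit — i.e. each
indecomposable finite `(G,G')`-biset — is isomorphic, equivariantly for both actions,
to a standard biset `G' ×_{(H,φ)} G`. -/
theorem biset_decomposition {G G' X : Type*} [Group G] [Group G'] [Finite G] [Finite G']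
    [Finite X]
    (smulR : X → G → X) (hR1 : ∀ x, smulR x 1 = x)
    (hRm : ∀ x g₁ g₂, smulR x (g₁ * g₂) = smulR (smulR x g₁) g₂)
    (smulL : G' → X → X) (hL1 : ∀ x, smulL 1 x = x)
    (hLm : ∀ g₁' g₂' x, smulL (g₁' * g₂') x = smulL g₁' (smulL g₂' x))
    (hcomm : ∀ g' x g, smulL g' (smulR x g) = smulR (smulL g' x) g)
    (hfree : ∀ (g' : G') (x : X), smulL g' x = x → g' = 1) :
    Equivalence (fun x y : X => ∃ (g' : G') (g : G), smulL g' (smulR x g) = y) ∧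
    ∀ x : X, ∃ (H : Subgroup G) (φ : ↥H →* G') (f : Quot (BisetRel H φ) → X),
      Function.Injective f ∧
      Set.range f = {y | ∃ (g' : G') (g : G), smulL g' (smulR x g) = y} ∧
      (∀ q g, f (bisetMulR H φ q g) = smulR (f q) g) ∧
      (∀ g' q, f (bisetMulL H φ g' q) = smulL g' (f q)) := by
  have cancel : ∀ (a b : G') (y : X), smulL a y = smulL b y → a = b := by
    intro a b y h
    have h1 : smulL (b⁻¹ * a) y = y := by rw [hLm, h, ← hLm, inv_mul_cancel, hL1]
    exact (inv_mul_eq_one.mp (hfree _ _ h1)).symm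
  constructor
  · refine ⟨fun x => ⟨1, 1, by rw [hR1, hL1]⟩, ?_, ?_⟩
    · rintro x y ⟨g', g, rfl⟩
      refine ⟨g'⁻¹, g⁻¹, ?_⟩
      rw [hcomm, ← hLm, inv_mul_cancel, hL1, ← hRm, mul_inv_cancel, hR1]
    · rintro x y z ⟨a', a, rfl⟩ ⟨b', b, rfl⟩
      exact ⟨b' * a', a * b, by rw [hRm, hLm, hcomm]⟩
  · intro x
    let H : Subgroup G :=
      { carrier := {h | ∃ g', smulL g' (smulR x h⁻¹) = x}
        one_mem' := ⟨1, by rw [inv_one, hR1, hL1]⟩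
        mul_mem' := by
          rintro a b ⟨ga, ha⟩ ⟨gb, hb⟩
          exact ⟨ga * gb, by rw [mul_inv_rev, hRm, hLm, hcomm, hb, ha]⟩
        inv_mem' := by
          rintro a ⟨ga, ha⟩
          refine ⟨ga⁻¹, ?_⟩
          rw [inv_inv]
          have h2 : smulR x a = smulL ga x := by
            conv_lhs => rw [← ha, hcomm, ← hRm, inv_mul_cancel, hR1]
          rw [h2, ← hLm, inv_mul_cancel, hL1] }
    -- the defining property of membership
    have hmem : ∀ h : G, h ∈ H ↔ ∃ g', smulL g' (smulR x h⁻¹) = x := fun h => Iff.rfl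
    have φex : ∀ h : ↥H, ∃ g', smulL g' (smulR x (h : G)⁻¹) = x := fun h => h.2
    let φf : ↥H → G' := fun h => Classical.choose (φex h)
    have φspec : ∀ h : ↥H, smulL (φf h) (smulR x (h : G)⁻¹) = x :=
      fun h => Classical.choose_spec (φex h)
    have φuniq : ∀ (h : ↥H) (g' : G'), smulL g' (smulR x (h : G)⁻¹) = x → g' = φf h := by
      intro h g' hg'
      exact cancel _ _ _ (by rw [hg', φspec])
    have φmul : ∀ h₁ h₂ : ↥H, φf (h₁ * h₂) = φf h₁ * φf h₂ := by
      intro h₁ h₂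
      refine (φuniq _ _ ?_).symm
      have : ((h₁ * h₂ : ↥H) : G)⁻¹ = ((h₂ : G))⁻¹ * ((h₁ : G))⁻¹ := by
        push_cast; rw [mul_inv_rev]
      rw [this, hRm, hLm, hcomm, φspec, φspec]
    have φone : φf 1 = 1 := (φuniq 1 1 (by simp [hR1, hL1])).symm
    let φ : ↥H →* G' := ⟨⟨φf, φone⟩, φmul⟩
    refine ⟨H, φ, ?_⟩
    have fwd : ∀ a b : G' × G, BisetRel H φ a b →
        smulL a.1 (smulR x a.2) = smulL b.1 (smulR x b.2) := by
      rintro a b ⟨h, rfl⟩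
      show _ = smulL (a.1 * φf h) (smulR x ((h : G)⁻¹ * a.2))
      rw [hRm, hLm, hcomm (φf h), φspec]
    refine ⟨Quot.lift (fun p => smulL p.1 (smulR x p.2)) fwd, ?_, ?_, ?_, ?_⟩
    · intro q₁ q₂
      induction q₁ using Quot.ind with | _ a =>
      induction q₂ using Quot.ind with | _ b =>
      intro hab
      simp only [Quot.lift_mk] at hab
      have hmemh : a.2 * b.2⁻¹ ∈ H := by
        rw [hmem, mul_inv_rev, inv_inv]
        refine ⟨a.1⁻¹ * b.1, ?_⟩
        rw [hRm, hLm, hcomm, ← hab, ← hcomm, ← hRm, mul_inv_cancel, hR1, ← hLm,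
          inv_mul_cancel, hL1]
      have hφ : φf ⟨a.2 * b.2⁻¹, hmemh⟩ = a.1⁻¹ * b.1 := by
        refine (φuniq _ _ ?_).symm
        show smulL (a.1⁻¹ * b.1) (smulR x (a.2 * b.2⁻¹)⁻¹) = x
        rw [mul_inv_rev, inv_inv, hRm, hLm, hcomm, ← hab, ← hcomm, ← hRm,
          mul_inv_cancel, hR1, ← hLm, inv_mul_cancel, hL1]
      refine Quot.sound ⟨⟨a.2 * b.2⁻¹, hmemh⟩, ?_⟩
      show b = (a.1 * φf _, _ * a.2)
      rw [hφ]
      ext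
      · simp
      · show b.2 = (a.2 * b.2⁻¹)⁻¹ * a.2
        rw [mul_inv_rev, inv_inv, mul_assoc, inv_mul_cancel, mul_one]
    · ext y
      constructor
      · rintro ⟨q, rfl⟩
        induction q using Quot.ind with | _ a =>
        exact ⟨a.1, a.2, rfl⟩
      · rintro ⟨g', g, rfl⟩
        exact ⟨Quot.mk _ (g', g), rfl⟩
    · intro q g
      induction q using Quot.ind with | _ a =>
      show smulL a.1 (smulR x (a.2 * g)) = smulR (smulL a.1 (smulR x a.2)) g
      rw [hRm, hcomm]
    · intro g' q
      induction q using Quot.ind with | _ a =>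
      show smulL (g' * a.1) (smulR x a.2) = smulL g' (smulL a.1 (smulR x a.2))
      rw [hLm]
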